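/- Let π be a nonempty set of primes and let (p_i)_{i≥1} be an enumeration of π, that is, a sequence of primes whose set of values is exactly π (repetitions allowed). For a finite semigroup S, the following are equivalent: (1) every subgroup of S is a π-group; (2) for every s ∈ S there exists N such that for all n ≥ N, s^{(p_1⋯p_n)^{n!}} = s^ω, where s^ω denotes the unique idempotent power of s. -/

import Mathlib

/-- `spow s n` is the power `s^(n+1)` of `s`, defined in any magma. -/
def spow {S : Type*} [Mul S] (s : S) (n : ℕ) : S := (fun x => x * s)^[n] s

/-- A subset `G` of a semigroup is a group under the induced multiplication:
it is closed under multiplication, has a two-sided identity element, and every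
element has a two-sided inverse.  (A subgroup of a semigroup is a
subsemigroup which is a group.) -/
def IsGroupSet {M : Type*} [Mul M] (G : Set M) : Prop :=
  (∀ x ∈ G, ∀ y ∈ G, x * y ∈ G) ∧
    ∃ e ∈ G, (∀ x ∈ G, e * x = x ∧ x * e = x) ∧
      ∀ x ∈ G, ∃ y ∈ G, x * y = e ∧ y * x = e

theorem spow_succ {S : Type*} [Mul S] (s : S) (n : ℕ) :
    spow s (n + 1) = spow s n * s := by
  simp [spow, Function.iterate_succ_apply']

theorem spow_add {S : Type*} [Semigroup S] (s : S) (a b : ℕ) :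
    spow s a * spow s b = spow s (a + b + 1) := by
  induction b with
  | zero =>
    show spow s a * spow s 0 = spow s (a + 1)
    rw [spow_succ]; rfl
  | succ b ih =>
    rw [spow_succ s b, ← mul_assoc, ih, ← spow_succ,
      show a + b + 1 + 1 = a + (b+1) + 1 from by omega]

theorem spow_shift_of_period {S : Type*} [Semigroup S] (s : S) (m c : ℕ)
    (h : spow s (m + c) = spow s m) (u t : ℕ) :
    spow s (m + u + t * c) = spow s (m + u) := by
  have h1 : ∀ v, spow s (m + v + c) = spow s (m + v) := by
    intro v
    cases v with
    | zero => simpa using h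
    | succ v =>
      have e1 : spow s (m + c) * spow s v = spow s (m + c + v + 1) := spow_add ..
      have e2 : spow s m * spow s v = spow s (m + v + 1) := spow_add ..
      rw [h, e2] at e1
      rw [show m + (v+1) + c = m + c + v + 1 from by omega,
        show m + (v+1) = m + v + 1 from by omega]
      exact e1.symm
  induction t with
  | zero => simp
  | succ t ih =>
    have h2 := h1 (u + t * c)
    rw [show m + (u + t*c) + c = m + u + (t+1) * c from by ring,
      show m + (u + t*c) = m + u + t * c from by ring] at h2
    rw [h2, ih]

theorem aux_dvd_pow : ∀ d : ℕ, ∀ P, 0 < d → (∀ q, Nat.Prime q → q ∣ d → q ∣ P) →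
    ∀ m, d ≤ m → d ∣ P ^ m := by
  intro d
  induction d using Nat.strong_induction_on with
  | _ d ih =>
    intro P hd h m hm
    rcases eq_or_lt_of_le (show 1 ≤ d from hd) with h1 | h1
    · rw [← h1]; exact one_dvd _
    · set q := d.minFac with hqdef
      have hq : q.Prime := Nat.minFac_prime (by omega)
      obtain ⟨d', hdd⟩ := Nat.minFac_dvd d
      have hq2 : 2 ≤ q := hq.two_le
      have hd'0 : 0 < d' := by
        rcases Nat.eq_zero_or_pos d' with h0 | h0
        · rw [h0, Nat.mul_zero] at hdd; omega
        · exact h0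
      have hlt : d' < d := by
        rw [hdd]
        calc d' = 1 * d' := (one_mul d').symm
        _ < q * d' := (Nat.mul_lt_mul_right hd'0).mpr (by omega)
      have hpow : P ^ m = P * P ^ (m - 1) := by
        rw [← pow_succ']
        congr 1
        omega
      rw [hpow, hdd]
      exact mul_dvd_mul (h q hq (hdd ▸ dvd_mul_right q d'))
        (ih d' hlt P hd'0 (fun r hr hrd => h r hr (hdd ▸ hrd.mul_left q)) (m-1) (by omega))

/-- Let `π` be a nonempty set of primes and `(p_i)_{i ≥ 1}` an enumeration of
`π` (repetitions allowed).  For a finite semigroup `S`, the following are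
equivalent: (1) every subgroup of `S` is a `π`-group; (2) for every `s ∈ S`
and the unique idempotent power `e = s^ω` of `s`, there exists `N` such that
for all `n ≥ N`, `s^((p₁⋯p_n)^(n!)) = s^ω`.  (Here `spow s m = s^(m+1)`, so
`s^j = spow s (j - 1)` for `j ≥ 1`.) -/
theorem subgroups_pi_iff_nu_pi_eq_omega
    (π : Set ℕ) (hπne : π.Nonempty) (hπ : ∀ q ∈ π, Nat.Prime q)
    (p : ℕ → ℕ) (hmem : ∀ i, 1 ≤ i → p i ∈ π)
    (hsurj : ∀ q ∈ π, ∃ i, 1 ≤ i ∧ p i = q)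
    (S : Type) [Semigroup S] [Finite S] :
    (∀ H : Set S, IsGroupSet H →
        ∀ q : ℕ, Nat.Prime q → q ∣ Nat.card ↥H → q ∈ π)
    ↔
    (∀ s e : S, IsIdempotentElem e → (∃ m : ℕ, spow s m = e) →
      ∃ N : ℕ, ∀ n, N ≤ n →
        spow s ((∏ i ∈ Finset.Icc 1 n, p i) ^ (Nat.factorial n) - 1) = e) := by
  constructor
  · -- (1) → (2)
    intro h1 s e he hm
    classical
    obtain ⟨m0, hm0⟩ := hm
    obtain ⟨i, j, hne, hij⟩ := Finite.exists_ne_map_eq_of_infinite (spow s)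
    have hex : ∃ c, 1 ≤ c ∧ spow s (min i j + c) = spow s (min i j) := by
      rcases Nat.lt_or_ge i j with hlt | hge
      · exact ⟨j - i, by omega, by
          rw [min_eq_left hlt.le, show i + (j - i) = j from by omega]; exact hij.symm⟩
      · have hlt : j < i := lt_of_le_of_ne hge (Ne.symm hne)
        exact ⟨i - j, by omega, by
          rw [min_eq_right hlt.le, show j + (i - j) = i from by omega]; exact hij⟩
    set k := min i j with hk
    set d := Nat.find hex with hddef
    obtain ⟨hd1, hdper⟩ := Nat.find_spec hex
    have shift : ∀ a t, k ≤ a → spow s (a + t * d) = spow s a := by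
      intro a t ha
      obtain ⟨u, rfl⟩ := Nat.exists_eq_add_of_le ha
      exact spow_shift_of_period s k d hdper u t
    have dvd_period : ∀ m c, k ≤ m → 1 ≤ c → spow s (m + c) = spow s m → d ∣ c := by
      intro m c hmk hc hper
      have hA : spow s (k + c) = spow s k := by
        have hle : m ≤ k + m * d :=
          le_trans (Nat.le_mul_of_pos_right m hd1) (Nat.le_add_left _ _)
        obtain ⟨u0, hu0⟩ := Nat.exists_eq_add_of_le hle
        have B1 : spow s (k + c + m * d) = spow s (k + c) := shift (k + c) m (Nat.le_add_right k c)
        have B2 : spow s (k + m * d) = spow s k := shift k m le_rfl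
        have B3 := spow_shift_of_period s m c hper u0 1
        rw [one_mul, ← hu0, show k + m * d + c = k + c + m * d from by ring, B1, B2] at B3
        exact B3
      obtain ⟨r, qq, hrq, hrlt⟩ : ∃ r qq, c = d * qq + r ∧ r < d :=
        ⟨c % d, c / d, (Nat.div_add_mod c d).symm, Nat.mod_lt _ (by omega)⟩
      rcases Nat.eq_zero_or_pos r with hr | hr
      · exact ⟨qq, by omega⟩
      · exfalso
        have B4 : spow s (k + r + qq * d) = spow s (k + r) := shift _ _ (Nat.le_add_right _ _)
        rw [show k + r + qq * d = k + c from by rw [hrq]; ring] at B4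
        rw [hA] at B4
        exact Nat.find_min hex (show r < Nat.find hex from by rw [← hddef]; exact hrlt)
          ⟨hr, B4.symm⟩
    have he' : e * e = e := he
    have h0 : spow s (m0 + (m0 + 1)) = spow s m0 := by
      have h3 := spow_add s m0 m0
      rw [hm0, he'] at h3
      rw [show m0 + (m0+1) = m0 + m0 + 1 from by omega, hm0]
      exact h3.symm
    have hdm0 : d ∣ m0 + 1 := by
      have hper := spow_shift_of_period s m0 (m0+1) h0 k 1
      rw [one_mul] at hper
      exact dvd_period (m0 + k) (m0 + 1) (by omega) (by omega)
        (by rw [show m0 + k + (m0 + 1) = m0 + k + (m0+1) from rfl]; exact hper)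
    set L := m0 + k * (m0 + 1) with hL
    have heL : spow s L = e := by
      have h3 := spow_shift_of_period s m0 (m0+1) h0 0 k
      rw [show m0 + 0 + k * (m0+1) = L from by omega,
        show m0 + 0 = m0 from rfl, hm0] at h3
      exact h3
    have hkL : k ≤ L := by
      have : k ≤ k * (m0+1) := Nat.le_mul_of_pos_right k (by omega)
      omega
    have hdL : d ∣ L + 1 := by
      have h3 : L + 1 = (k + 1) * (m0 + 1) := by rw [hL]; ring
      rw [h3]; exact Dvd.dvd.mul_left hdm0 (k+1)
    obtain ⟨w, hw⟩ := hdL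
    have hw1 : 1 ≤ w := by
      rcases Nat.eq_zero_or_pos w with h0' | h0'
      · rw [h0', Nat.mul_zero] at hw; omega
      · exact h0'
    set g : ℕ → S := fun t => spow s (t * (L + 2) + (L + 1)) with hg
    have gval : ∀ t, g t = spow s (t * (L + 2) + (L + 1)) := fun t => rfl
    have hkI : ∀ t, k ≤ t * (L + 2) + (L + 1) := fun t => by omega
    have gshift : ∀ x c, g (x + c * d) = g x := by
      intro x c
      rw [gval, gval,
        show (x + c * d) * (L + 2) + (L + 1) = (x * (L+2) + (L+1)) + (c * (L + 2)) * d from by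
          ring]
      exact shift _ _ (hkI x)
    have gmul : ∀ t u, g t * g u = g (t + u + 1) := by
      intro t u
      rw [gval, gval, gval, spow_add,
        show (t * (L+2) + (L+1)) + (u * (L+2) + (L+1)) + 1
          = (t + u + 1) * (L + 2) + (L + 1) from by ring]
    have hgL : g L = e := by
      rw [gval]
      have h5 : (w * (L+1)) * d = (d * w) * (L + 1) := by ring
      rw [← hw] at h5
      have hidx : L * (L + 2) + (L + 1) = L + (w * (L + 1)) * d := by
        rw [h5]; ring
      rw [hidx, shift L _ hkL, heL]
    set H := Set.range g with hH
    have hcl : ∀ x ∈ H, ∀ y ∈ H, x * y ∈ H := by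
      rintro x ⟨t, rfl⟩ y ⟨u, rfl⟩; exact ⟨t + u + 1, (gmul t u).symm⟩
    have hidH : ∀ x ∈ H, e * x = x ∧ x * e = x := by
      rintro x ⟨t, rfl⟩
      have h6 : w * d = d * w := Nat.mul_comm w d
      constructor
      · rw [← hgL, gmul, show L + t + 1 = t + w * d from by omega]
        exact gshift t w
      · rw [← hgL, gmul, show t + L + 1 = t + w * d from by omega]
        exact gshift t w
    have hinvH : ∀ x ∈ H, ∃ y ∈ H, x * y = e ∧ y * x = e := by
      rintro x ⟨t, rfl⟩
      obtain ⟨D, hD⟩ : ∃ D, d = D + 1 := ⟨d - 1, by omega⟩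
      refine ⟨g (L + (t+1) * D), ⟨_, rfl⟩, ?_, ?_⟩
      · rw [gmul, show t + (L + (t+1) * D) + 1 = L + (t+1) * d from by rw [hD]; ring]
        exact (gshift L (t+1)).trans hgL
      · rw [gmul, show (L + (t+1) * D) + t + 1 = L + (t+1) * d from by rw [hD]; ring]
        exact (gshift L (t+1)).trans hgL
    have hGS : IsGroupSet H := ⟨hcl, e, ⟨L, hgL⟩, hidH, hinvH⟩
    have ginj : ∀ t u, t < d → u < d → g t = g u → t = u := by
      have key : ∀ t u, u ≤ t → t < d → g t = g u → t = u := by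
        intro t u hut htd hgtu
        rcases Nat.eq_or_lt_of_le hut with h0' | h0'
        · exact h0'.symm
        · have h7 : u + (t - u) = t := by omega
          have hc : t * (L+2) + (L+1) = (u * (L+2) + (L+1)) + (t - u) * (L + 2) := by
            have h8 : t * (L+2) = u * (L+2) + (t-u)*(L+2) := by
              rw [← h7, Nat.add_mul, h7]
            omega
          have hper : spow s ((u * (L+2) + (L+1)) + (t-u)*(L+2))
              = spow s (u * (L+2) + (L+1)) := by
            rw [← hc, ← gval, ← gval]; exact hgtu
          have hone : 1 ≤ (t - u) * (L + 2) := by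
            have := Nat.mul_le_mul (show 1 ≤ t - u from by omega) (show 1 ≤ L + 2 from by omega)
            omega
          have hdvd2 : d ∣ (t-u)*(L+2) := dvd_period _ _ (hkI u) hone hper
          have hdvd3 : d ∣ (t-u)*(L+1) := ⟨(t-u)*w, by rw [hw]; ring⟩
          have hdvd4 : d ∣ (t-u) := by
            have h8 : (t-u)*(L+2) = (t-u)*(L+1) + (t-u) := by ring
            have h9 := Nat.dvd_sub hdvd2 hdvd3
            rw [h8, Nat.add_sub_cancel_left] at h9
            exact h9
          have := Nat.le_of_dvd (by omega) hdvd4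
          omega
      intro t u htd hud h
      rcases le_total u t with h1' | h1'
      · exact key t u h1' htd h
      · exact (key u t h1' hud h.symm).symm
    have hcard : Nat.card ↥H = d := by
      have hHeq : H = ↑((Finset.range d).image g) := by
        ext x
        simp only [hH, Set.mem_range, Finset.coe_image, Set.mem_image, Finset.mem_coe,
          Finset.mem_range]
        constructor
        · rintro ⟨t, rfl⟩
          refine ⟨t % d, Nat.mod_lt _ (by omega), ?_⟩
          have h9 : (t/d) * d = d * (t/d) := Nat.mul_comm _ _
          have hdm := Nat.div_add_mod t d
          calc g (t % d) = g (t % d + (t/d) * d) := (gshift _ _).symm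
            _ = g t := by rw [show t % d + (t/d)*d = t from by omega]
        · rintro ⟨t, htd, rfl⟩; exact ⟨t, rfl⟩
      rw [hHeq, Nat.card_coe_set_eq, Set.ncard_coe_finset,
        Finset.card_image_of_injOn
          (fun a ha b hb hab => ginj a b (Finset.mem_range.mp ha) (Finset.mem_range.mp hb) hab),
        Finset.card_range]
    have hπd : ∀ q, Nat.Prime q → q ∣ d → q ∈ π := by
      intro q hq hqd
      exact h1 H hGS q hq (by rw [hcard]; exact hqd)
    have hι : ∀ q : ℕ, ∃ i, q ∈ d.primeFactors → (1 ≤ i ∧ p i = q) := by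
      intro q
      by_cases hqF : q ∈ d.primeFactors
      · obtain ⟨i', hi1, hi2⟩ := hsurj q (hπd q (Nat.prime_of_mem_primeFactors hqF)
          (Nat.dvd_of_mem_primeFactors hqF))
        exact ⟨i', fun _ => ⟨hi1, hi2⟩⟩
      · exact ⟨1, fun h => absurd h hqF⟩
    choose ι hι2 using hι
    refine ⟨max (k + 2) (max d (d.primeFactors.sup ι)) + 1, ?_⟩
    intro n hn
    set P := ∏ i' ∈ Finset.Icc 1 n, p i' with hP
    have hn1 : 1 ≤ n := by omega
    have hprime : ∀ i' ∈ Finset.Icc 1 n, Nat.Prime (p i') :=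
      fun i' hi' => hπ _ (hmem i' (Finset.mem_Icc.mp hi').1)
    have hP2 : 2 ≤ P := by
      have h1mem : (1:ℕ) ∈ Finset.Icc 1 n := Finset.mem_Icc.mpr ⟨le_refl 1, hn1⟩
      have hdvdP : p 1 ∣ P := Finset.dvd_prod_of_mem p h1mem
      have hPpos : 0 < P := Finset.prod_pos (fun i' hi' => (hprime i' hi').pos)
      have h10 := Nat.le_of_dvd hPpos hdvdP
      have h11 := (hπ _ (hmem 1 le_rfl)).two_le
      omega
    set M := P ^ n.factorial with hM
    have hdM : d ∣ M := by
      refine aux_dvd_pow d P (by omega) (fun q hq hqd => ?_) n.factorial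
        (le_trans (by omega) (Nat.self_le_factorial n))
      have hqF : q ∈ d.primeFactors := Nat.mem_primeFactors.mpr ⟨hq, hqd, by omega⟩
      have hiq := hι2 q hqF
      have hile : ι q ≤ n := le_trans (le_trans (Finset.le_sup hqF) (by omega)) hn
      have himem : ι q ∈ Finset.Icc 1 n := Finset.mem_Icc.mpr ⟨hiq.1, hile⟩
      rw [← hiq.2]
      exact Finset.dvd_prod_of_mem p himem
    have hMbig : k + 2 ≤ M := by
      have h2n : 2 ^ n ≤ M := by
        calc 2 ^ n ≤ 2 ^ n.factorial := Nat.pow_le_pow_right (by omega) (Nat.self_le_factorial n)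
        _ ≤ P ^ n.factorial := Nat.pow_le_pow_left hP2 _
      have hn2 : n < 2 ^ n := Nat.lt_two_pow_self
      omega
    have hML : (M - 1) % d = L % d := by
      obtain ⟨x, hx⟩ := hdM
      have hx1 : 1 ≤ x := by
        rcases Nat.eq_zero_or_pos x with h0' | h0'
        · rw [h0', Nat.mul_zero] at hx; omega
        · exact h0'
      have e1 : M - 1 = d * (x - 1) + (d - 1) := by
        have h12 : d * x = d * (x-1) + d := by
          have h7 : x - 1 + 1 = x := by omega
          calc d * x = d * ((x-1) + 1) := by rw [h7]
          _ = d * (x-1) + d := by ring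
        omega
      have e2 : L = d * (w - 1) + (d - 1) := by
        have h12 : d * w = d * (w-1) + d := by
          have h7 : w - 1 + 1 = w := by omega
          calc d * w = d * ((w-1)+1) := by rw [h7]
          _ = d * (w-1) + d := by ring
        omega
      rw [e1, e2, Nat.mul_add_mod, Nat.mul_add_mod]
    have final : spow s (M - 1) = spow s L := by
      rcases le_total (M - 1) L with hle | hle
      · have hd5 : d ∣ L - (M-1) := (Nat.modEq_iff_dvd' hle).mp hML
        obtain ⟨t, ht⟩ := hd5
        have h9 : t * d = d * t := Nat.mul_comm _ _
        rw [show L = (M - 1) + t * d from by omega]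
        exact (shift (M-1) t (by omega)).symm
      · have hd5 : d ∣ (M-1) - L := (Nat.modEq_iff_dvd' hle).mp hML.symm
        obtain ⟨t, ht⟩ := hd5
        have h9 : t * d = d * t := Nat.mul_comm _ _
        rw [show M - 1 = L + t * d from by omega]
        exact shift L t hkL
    rw [final, heL]
  · -- (2) → (1)
    intro h2 H hH q hq hqcard
    classical
    obtain ⟨hcl, eH, heH, hid, hinv⟩ := hH
    letI : Mul ↥H := ⟨fun a b => ⟨a.1 * b.1, hcl a.1 a.2 b.1 b.2⟩⟩
    letI : One ↥H := ⟨⟨eH, heH⟩⟩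
    letI : Inv ↥H := ⟨fun a => ⟨(hinv a.1 a.2).choose, (hinv a.1 a.2).choose_spec.1⟩⟩
    letI : Group ↥H := Group.ofLeftAxioms
      (fun a b c => Subtype.ext (mul_assoc a.1 b.1 c.1))
      (fun a => Subtype.ext (hid a.1 a.2).1)
      (fun a => Subtype.ext (hinv a.1 a.2).choose_spec.2.2)
    haveI : Fintype ↥H := Fintype.ofFinite _
    haveI : Fact q.Prime := ⟨hq⟩
    have hdvd : q ∣ Fintype.card ↥H := by rwa [Nat.card_eq_fintype_card] at hqcard
    obtain ⟨x, hx⟩ := exists_prime_orderOf_dvd_card q hdvd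
    have hcoe : ∀ n : ℕ, ((x ^ (n+1) : ↥H) : S) = spow (x : S) n := by
      intro n
      induction n with
      | zero => simp [spow]
      | succ n ih =>
        rw [pow_succ]
        show ((x ^ (n+1) : ↥H) : S) * (x : S) = spow (x : S) (n+1)
        rw [ih, spow_succ]
    have heid : IsIdempotentElem eH := (hid eH heH).1
    have hq1 : 1 ≤ q := hq.one_lt.le
    have hexi : ∃ m, spow (x : S) m = eH := by
      refine ⟨q - 1, ?_⟩
      have h3 := hcoe (q - 1)
      rw [show q - 1 + 1 = q from by omega] at h3
      rw [← h3, ← hx, pow_orderOf_eq_one]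
      rfl
    obtain ⟨N, hN⟩ := h2 (x : S) eH heid hexi
    set n := max N 1 with hn
    have hspec := hN n (le_max_left _ _)
    set P := ∏ i ∈ Finset.Icc 1 n, p i with hP
    have hPpos : 0 < P :=
      Finset.prod_pos (fun i hi => (hπ _ (hmem i (Finset.mem_Icc.mp hi).1)).pos)
    have hMpos : 0 < P ^ n.factorial := pow_pos hPpos _
    have hxM : x ^ (P ^ n.factorial) = (1 : ↥H) := by
      apply Subtype.ext
      have h3 := hcoe (P ^ n.factorial - 1)
      rw [show P ^ n.factorial - 1 + 1 = P ^ n.factorial from by omega] at h3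
      rw [h3, hspec]
      rfl
    have hqM : q ∣ P ^ n.factorial := hx ▸ orderOf_dvd_of_pow_eq_one hxM
    have hqP : q ∣ P := hq.dvd_of_dvd_pow hqM
    obtain ⟨i, hi, hqi⟩ := hq.prime.exists_mem_finset_dvd hqP
    have hi1 : 1 ≤ i := (Finset.mem_Icc.mp hi).1
    have hqe : q = p i := (Nat.prime_dvd_prime_iff_eq hq (hπ _ (hmem i hi1))).mp hqi
    rw [hqe]
    exact hmem i hi1
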